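/- Let H be a division ring of finite dimension over its center k, and let k ⊆ L ⊆ M be a tower of commutative field extensions of k. In the k-algebra H ⊗_k M, the centralizer of the image of H ⊗_k L under the canonical map H ⊗_k L → H ⊗_k M equals the subalgebra 1 ⊗ M (the image of k ⊗_k M), which is also the center of H ⊗_k M. -/

import Mathlib

open TensorProduct

/-- Auxiliary: if `x : H ⊗[k] M` commutes with every `h ⊗ₜ 1`, and `H` has center `k`,
then `x` lies in the image of the right inclusion `M → H ⊗[k] M`. -/
theorem aux_centralizer_left_le
    (k : Type*) [Field k]
    (H : Type*) [DivisionRing H] [Algebra k H]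
    (hcenter : Subalgebra.center k H = ⊥)
    (M : Type*) [Field M] [Algebra k M]
    {x : H ⊗[k] M} (hx : ∀ h : H, (h ⊗ₜ[k] (1 : M)) * x = x * (h ⊗ₜ[k] (1 : M))) :
    x ∈ (Algebra.TensorProduct.includeRight : M →ₐ[k] H ⊗[k] M).range := by
  classical
  set b := Module.Basis.ofVectorSpace k M with hb
  set e : H ⊗[k] M ≃ₗ[k] (Module.Basis.ofVectorSpaceIndex k M →₀ H) :=
    (TensorProduct.congr (LinearEquiv.refl k H) b.repr).trans
      (TensorProduct.finsuppScalarRight k k H _) with he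
  have e_tmul : ∀ (h : H) (m : M) (i), e (h ⊗ₜ[k] m) i = b.repr m i • h := by
    intro h m i
    simp [he, TensorProduct.congr_tmul]
  have key_left : ∀ (h : H) (y : H ⊗[k] M) (i), e ((h ⊗ₜ[k] (1 : M)) * y) i = h * e y i := by
    intro h y i
    induction y using TensorProduct.induction_on with
    | zero => simp
    | tmul h' m =>
        rw [Algebra.TensorProduct.tmul_mul_tmul, one_mul, e_tmul, e_tmul, mul_smul_comm]
    | add y z hy hz => rw [mul_add, map_add, Finsupp.add_apply, hy, hz, map_add,
        Finsupp.add_apply, mul_add]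
  have key_right : ∀ (h : H) (y : H ⊗[k] M) (i), e (y * (h ⊗ₜ[k] (1 : M))) i = e y i * h := by
    intro h y i
    induction y using TensorProduct.induction_on with
    | zero => simp
    | tmul h' m =>
        rw [Algebra.TensorProduct.tmul_mul_tmul, mul_one, e_tmul, e_tmul, smul_mul_assoc]
    | add y z hy hz => rw [add_mul, map_add, Finsupp.add_apply, hy, hz, map_add,
        Finsupp.add_apply, add_mul]
  have hcoef : ∀ i, ∃ c : k, e x i = algebraMap k H c := by
    intro i
    have : e x i ∈ Subalgebra.center k H := by
      rw [Subalgebra.mem_center_iff]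
      intro h
      have := hx h
      have h1 := key_left h x i
      have h2 := key_right h x i
      rw [this] at h1
      rw [h1] at h2
      exact h2
    rw [hcenter, Algebra.mem_bot] at this
    obtain ⟨c, hc⟩ := this
    exact ⟨c, hc.symm⟩
  have hx' : x = (e x).support.sum fun i => e.symm (Finsupp.single i (e x i)) := by
    conv_lhs => rw [← e.symm_apply_apply x, ← Finsupp.sum_single (e x)]
    rw [Finsupp.sum, map_sum]
  rw [hx']
  refine Subalgebra.sum_mem _ fun i _ => ?_
  obtain ⟨c, hc⟩ := hcoef i
  refine ⟨c • b i, ?_⟩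
  rw [hc]
  have : e.symm (Finsupp.single i (algebraMap k H c)) = (algebraMap k H c) ⊗ₜ[k] (b i) := by
    rw [he]
    simp only [LinearEquiv.trans_symm, LinearEquiv.trans_apply,
      TensorProduct.finsuppScalarRight_symm_apply_single, TensorProduct.congr_symm_tmul,
      LinearEquiv.refl_symm, LinearEquiv.refl_apply]
    congr 1
  rw [this]
  show (1 : H) ⊗ₜ[k] (c • b i) = _
  rw [TensorProduct.tmul_smul, TensorProduct.smul_tmul', Algebra.algebraMap_eq_smul_one]

/-- **Lemma 4.b.** Let `H` be a division ring of finite dimension over its center `k` and let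
`k ⊆ L ⊆ M` be a tower of commutative field extensions. In `H ⊗[k] M`, the centralizer of
the image of `H ⊗[k] L` under the canonical map equals `1 ⊗ M` (the image of `M` under the
right inclusion), which is also the center of `H ⊗[k] M`. -/
theorem centralizer_tensor_tower_eq
    (k : Type*) [Field k]
    (H : Type*) [DivisionRing H] [Algebra k H] [FiniteDimensional k H]
    (hcenter : Subalgebra.center k H = ⊥)
    (L M : Type*) [Field L] [Field M] [Algebra k L] [Algebra k M]
    [Algebra L M] [IsScalarTower k L M] :
    Subalgebra.centralizer k
        (Set.range
          (Algebra.TensorProduct.map (AlgHom.id k H) (IsScalarTower.toAlgHom k L M)) :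
          Set (H ⊗[k] M)) =
        (Algebra.TensorProduct.includeRight : M →ₐ[k] H ⊗[k] M).range ∧
      (Algebra.TensorProduct.includeRight : M →ₐ[k] H ⊗[k] M).range =
        Subalgebra.center k (H ⊗[k] M) := by
  -- right inclusion range is contained in the center
  have h1 : (Algebra.TensorProduct.includeRight : M →ₐ[k] H ⊗[k] M).range ≤
      Subalgebra.center k (H ⊗[k] M) := by
    rintro _ ⟨m, rfl⟩
    rw [Subalgebra.mem_center_iff]
    intro y
    induction y using TensorProduct.induction_on with
    | zero => simp
    | tmul h' m' =>
        show (h' ⊗ₜ[k] m') * ((1 : H) ⊗ₜ[k] m) = ((1 : H) ⊗ₜ[k] m) * (h' ⊗ₜ[k] m')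
        rw [Algebra.TensorProduct.tmul_mul_tmul, Algebra.TensorProduct.tmul_mul_tmul,
          one_mul, mul_one, mul_comm]
    | add y z hy hz => rw [add_mul, mul_add, hy, hz]
  -- anything commuting with the image of `H ⊗ L` is in the range of the right inclusion
  have h2 : Subalgebra.centralizer k
      (Set.range
        (Algebra.TensorProduct.map (AlgHom.id k H) (IsScalarTower.toAlgHom k L M)) :
        Set (H ⊗[k] M)) ≤
      (Algebra.TensorProduct.includeRight : M →ₐ[k] H ⊗[k] M).range := by
    intro x hxmem
    rw [Subalgebra.mem_centralizer_iff] at hxmem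
    refine aux_centralizer_left_le k H hcenter M fun h => ?_
    have : (h ⊗ₜ[k] (1 : M)) ∈ Set.range
        (Algebra.TensorProduct.map (AlgHom.id k H) (IsScalarTower.toAlgHom k L M)) := by
      exact ⟨h ⊗ₜ[k] (1 : L), by simp⟩
    exact hxmem _ this
  -- center is contained in the centralizer of anything
  have h3 : Subalgebra.center k (H ⊗[k] M) ≤ Subalgebra.centralizer k
      (Set.range
        (Algebra.TensorProduct.map (AlgHom.id k H) (IsScalarTower.toAlgHom k L M)) :
        Set (H ⊗[k] M)) := by
    intro x hxmem
    rw [Subalgebra.mem_center_iff] at hxmem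
    rw [Subalgebra.mem_centralizer_iff]
    intro g _
    exact hxmem g
  constructor
  · exact le_antisymm h2 (le_trans h1 h3)
  · exact le_antisymm h1 (le_trans h3 h2)
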